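/- Let A(t) ∈ ℝ^{m×d} be a differentiable time-varying full-row-rank matrix with minimum singular value σ_min(t) > 0 and ‖A'(t)‖ ≤ G_A, and let b(t) ∈ ℝ^m be differentiable with ‖b'(t)‖ ≤ G_B. For a differentiable f₁ : ℝ^m → ℝ, define f(x;t) = f₁(A(t)x + b(t)). Then for all x with ‖x‖ ≤ R and ∇ₓf(x;t) ≠ 0, |∇ₜf(x;t)| / ‖∇ₓf(x;t)‖ ≤ (G_A R + G_B)/σ_min(t). -/

import Mathlib

/-- Corollary 1: for f(x;t) = f₁(A(t)x + b(t)) with ‖A'(t)‖ ≤ G_A, ‖b'(t)‖ ≤ G_B and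
minimum singular value σ_min(t) of the full-row-rank A(t), one has, for ‖x‖ ≤ R,
|∇ₜf(x;t)| / ‖∇ₓf(x;t)‖ ≤ (G_A R + G_B)/σ_min(t). -/
theorem stmt_19 {d m : ℕ}
    (A A' : ℝ → (EuclideanSpace ℝ (Fin d) →L[ℝ] EuclideanSpace ℝ (Fin m)))
    (b b' : ℝ → EuclideanSpace ℝ (Fin m))
    (GA GB R : ℝ) (hR : 0 < R)
    (hA : ∀ t : ℝ, HasDerivAt A (A' t) t) (hGA : ∀ t : ℝ, ‖A' t‖ ≤ GA)
    (hb : ∀ t : ℝ, HasDerivAt b (b' t) t) (hGB : ∀ t : ℝ, ‖b' t‖ ≤ GB)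
    (f₁ : EuclideanSpace ℝ (Fin m) → ℝ)
    (g₁ : EuclideanSpace ℝ (Fin m) → EuclideanSpace ℝ (Fin m))
    (hg₁ : ∀ y, HasGradientAt f₁ (g₁ y) y)
    (σmin : ℝ → ℝ) (hσpos : ∀ t : ℝ, 0 < σmin t)
    (hσ : ∀ (t : ℝ) (w : EuclideanSpace ℝ (Fin m)),
      σmin t * ‖w‖ ≤ ‖ContinuousLinearMap.adjoint (A t) w‖) :
    ∀ (x : EuclideanSpace ℝ (Fin d)) (t : ℝ), ‖x‖ ≤ R →
      ContinuousLinearMap.adjoint (A t) (g₁ (A t x + b t)) ≠ 0 →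
      |(inner ℝ (g₁ (A t x + b t)) (A' t x + b' t) : ℝ)| /
          ‖ContinuousLinearMap.adjoint (A t) (g₁ (A t x + b t))‖ ≤
        (GA * R + GB) / σmin t := by

  intro x t hx hne
  set w := g₁ (A t x + b t) with hw
  have hwn : (0:ℝ) < ‖ContinuousLinearMap.adjoint (A t) w‖ := norm_pos_iff.mpr hne
  have hσt := hσpos t
  have hCS : |(inner ℝ w (A' t x + b' t) : ℝ)| ≤ ‖w‖ * ‖A' t x + b' t‖ :=
    abs_real_inner_le_norm w _
  have hv : ‖A' t x + b' t‖ ≤ GA * R + GB := by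
    calc ‖A' t x + b' t‖ ≤ ‖A' t x‖ + ‖b' t‖ := norm_add_le _ _
    _ ≤ ‖A' t‖ * ‖x‖ + GB := add_le_add ((A' t).le_opNorm x) (hGB t)
    _ ≤ GA * R + GB := by
        have h1 : ‖A' t‖ ≤ GA := hGA t
        have h2 : (0:ℝ) ≤ ‖A' t‖ := norm_nonneg _
        nlinarith [norm_nonneg x]
  have hadj := hσ t w
  rw [div_le_div_iff₀ hwn hσt]
  have hGApos : (0:ℝ) ≤ GA := le_trans (norm_nonneg _) (hGA t)
  have hGBpos : (0:ℝ) ≤ GB := le_trans (norm_nonneg _) (hGB t)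
  nlinarith [norm_nonneg w, abs_nonneg (inner ℝ w (A' t x + b' t) : ℝ),
    norm_nonneg (A' t x + b' t)]
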